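/- Let γ ∈ (0,2), Q = γ/2 + 2/γ, μ > 0, and set μ̃ = (μπ l(γ²/4))^{4/γ²} / (π l(4/γ²)). Define R^{DOZZ}(α) = −( πμ l(γ²/4) )^{2(Q−α)/γ} · ( Γ(−γ(Q−α)/2) / Γ(γ(Q−α)/2) ) · ( Γ(−2(Q−α)/γ) / Γ(2(Q−α)/γ) ) for real α. Then for every real α such that none of the Gamma functions appearing on either side of the equation below (including those defining μ̃) is evaluated at a nonpositive integer, R^{DOZZ} satisfies the dual shift equation R^{DOZZ}(α) = −μ̃π · R^{DOZZ}(α + 2/γ) / ( l(−4/γ²) · l(2α/γ) · l(2 + 4/γ² − 2α/γ) ). -/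

import Mathlib

open MeasureTheory Set

/-- The special function `l(x) = Γ(x)/Γ(1-x)`. -/
noncomputable def lr (x : ℝ) : ℝ := Real.Gamma x / Real.Gamma (1 - x)

/-- The explicit reflection coefficient `R^{DOZZ}` of Liouville conformal field theory. -/
noncomputable def Rdozz (γ μ α : ℝ) : ℝ :=
  -(Real.pi * μ * lr (γ^2/4)) ^ (2*((γ/2 + 2/γ) - α)/γ)
    * (Real.Gamma (-(γ*((γ/2 + 2/γ) - α)/2)) / Real.Gamma (γ*((γ/2 + 2/γ) - α)/2))
    * (Real.Gamma (-(2*((γ/2 + 2/γ) - α)/γ)) / Real.Gamma (2*((γ/2 + 2/γ) - α)/γ))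

/-- Key algebraic identity behind the dual shift equation, with all Gamma values and
rpow values abstracted as nonzero atoms. -/
lemma rdozz_key (A B pi g1 g2 g3 g4 g5 g6 g7 g8 p na q nq r nr : ℝ)
    (h1 : na = -(p+1)) (h2 : q = (p+1)*r) (h3 : nq = r - q) (h4 : nr = -r)
    (hA : A ≠ 0) (hB : B ≠ 0) (hpi : pi ≠ 0) (hp : p ≠ 0) (hna : na ≠ 0) (hq : q ≠ 0)
    (hnq : nq ≠ 0) (hr : r ≠ 0)
    (e1 : g1 ≠ 0) (e2 : g2 ≠ 0) (e3 : g3 ≠ 0) (e4 : g4 ≠ 0) (e5 : g5 ≠ 0) (e6 : g6 ≠ 0)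
    (e7 : g7 ≠ 0) (e8 : g8 ≠ 0) :
    -(A*B) * (g1 / (p * g2)) * (g3 / g4)
      = -(A / (pi * (g7 / (nr * g8)))) * pi * (-B * (na * g1 / g2) * (g5 / g6))
          / (g8 / (r * g7) * (nq * g5 / g6) * (q * g4 / g3)) := by
  subst h1 h2 h3 h4
  have hp1 : p + 1 ≠ 0 := by
    intro h; apply hq; rw [h]; ring
  have hnq' : r - (p+1)*r ≠ 0 := hnq
  field_simp
  ring_nf
  simp [hp]

set_option maxHeartbeats 1000000 in
/-- Dual shift equation for the explicit reflection coefficient: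
`R(α) = -μ̃π R(α+2/γ) / ( l(-4/γ²) l(2α/γ) l(2+4/γ²-2α/γ) )`, where
`μ̃ = (μπ l(γ²/4))^{4/γ²}/(π l(4/γ²))` is the dual cosmological constant. -/
theorem rdozz_second_shift (γ μ α : ℝ) (hγ : γ ∈ Set.Ioo (0:ℝ) 2) (hμ : 0 < μ)
    (hΓ : ∀ x ∈ ([γ^2/4, 1 - γ^2/4, 4/γ^2, 1 - 4/γ^2,
        -(γ*((γ/2 + 2/γ) - α)/2), γ*((γ/2 + 2/γ) - α)/2,
        -(2*((γ/2 + 2/γ) - α)/γ), 2*((γ/2 + 2/γ) - α)/γ,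
        -(γ*((γ/2 + 2/γ) - (α + 2/γ))/2), γ*((γ/2 + 2/γ) - (α + 2/γ))/2,
        -(2*((γ/2 + 2/γ) - (α + 2/γ))/γ), 2*((γ/2 + 2/γ) - (α + 2/γ))/γ,
        -4/γ^2, 1 + 4/γ^2,
        2*α/γ, 1 - 2*α/γ,
        2 + 4/γ^2 - 2*α/γ, 1 - (2 + 4/γ^2 - 2*α/γ)] : List ℝ),
      ∀ n : ℕ, x ≠ -(n:ℝ)) :
    Rdozz γ μ α
      = -((μ * Real.pi * lr (γ^2/4)) ^ (4/γ^2) / (Real.pi * lr (4/γ^2))) * Real.pi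
          * Rdozz γ μ (α + 2/γ)
          / (lr (-4/γ^2) * lr (2*α/γ) * lr (2 + 4/γ^2 - 2*α/γ)) := by
  obtain ⟨hγ0, hγ2⟩ := hγ
  have hγne : γ ≠ 0 := ne_of_gt hγ0
  have hπ : (0:ℝ) < Real.pi := Real.pi_pos
  have h1 : (0:ℝ) < γ^2/4 := by positivity
  have h2 : (0:ℝ) < 1 - γ^2/4 := by nlinarith
  have hL : 0 < lr (γ^2/4) := by
    unfold lr
    exact div_pos (Real.Gamma_pos_of_pos h1) (Real.Gamma_pos_of_pos h2)
  have hP : 0 < Real.pi * μ * lr (γ^2/4) := by positivity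
  -- nonzero Gamma values
  have hG1 : Real.Gamma (-(γ*((γ/2 + 2/γ) - α)/2)) ≠ 0 :=
    Real.Gamma_ne_zero (hΓ _ (by simp))
  have hG2 : Real.Gamma (γ*((γ/2 + 2/γ) - (α + 2/γ))/2) ≠ 0 :=
    Real.Gamma_ne_zero (hΓ _ (by simp))
  have hG3 : Real.Gamma (-(2*((γ/2 + 2/γ) - α)/γ)) ≠ 0 :=
    Real.Gamma_ne_zero (hΓ _ (by simp))
  have hG4 : Real.Gamma (2*((γ/2 + 2/γ) - α)/γ) ≠ 0 :=
    Real.Gamma_ne_zero (hΓ _ (by simp))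
  have hG5 : Real.Gamma (-(2*((γ/2 + 2/γ) - (α + 2/γ))/γ)) ≠ 0 :=
    Real.Gamma_ne_zero (hΓ _ (by simp))
  have hG6 : Real.Gamma (2*((γ/2 + 2/γ) - (α + 2/γ))/γ) ≠ 0 :=
    Real.Gamma_ne_zero (hΓ _ (by simp))
  have hG7 : Real.Gamma (4/γ^2) ≠ 0 :=
    Real.Gamma_ne_zero (hΓ _ (by simp))
  have hG8 : Real.Gamma (-4/γ^2) ≠ 0 :=
    Real.Gamma_ne_zero (hΓ _ (by simp))
  -- nonzero scalars
  have za' : γ*((γ/2 + 2/γ) - (α + 2/γ))/2 ≠ 0 := by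
    simpa using hΓ _ (by simp : γ*((γ/2 + 2/γ) - (α + 2/γ))/2 ∈ _) 0
  have zna : -(γ*((γ/2 + 2/γ) - α)/2) ≠ 0 := by
    simpa using hΓ _ (by simp : -(γ*((γ/2 + 2/γ) - α)/2) ∈ _) 0
  have zb : 2*((γ/2 + 2/γ) - α)/γ ≠ 0 := by
    simpa using hΓ _ (by simp : 2*((γ/2 + 2/γ) - α)/γ ∈ _) 0
  have znb' : -(2*((γ/2 + 2/γ) - (α + 2/γ))/γ) ≠ 0 := by
    simpa using hΓ _ (by simp : -(2*((γ/2 + 2/γ) - (α + 2/γ))/γ) ∈ _) 0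
  have zc : (4:ℝ)/γ^2 ≠ 0 := by positivity
  have znc : -4/γ^2 ≠ 0 := by
    simpa using hΓ _ (by simp : -4/γ^2 ∈ _) 0
  simp only [Rdozz]
  rw [mul_comm μ Real.pi]
  rw [show (Real.pi * μ * lr (γ^2/4)) ^ (2*((γ/2 + 2/γ) - α)/γ)
      = (Real.pi * μ * lr (γ^2/4)) ^ ((4:ℝ)/γ^2)
        * (Real.pi * μ * lr (γ^2/4)) ^ (2*((γ/2 + 2/γ) - (α + 2/γ))/γ) from by
    rw [← Real.rpow_add hP]
    congr 1
    field_simp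
    ring]
  rw [show Real.Gamma (γ*((γ/2 + 2/γ) - α)/2)
      = (γ*((γ/2 + 2/γ) - (α + 2/γ))/2) * Real.Gamma (γ*((γ/2 + 2/γ) - (α + 2/γ))/2) from by
    rw [show γ*((γ/2 + 2/γ) - α)/2 = γ*((γ/2 + 2/γ) - (α + 2/γ))/2 + 1 from by
      field_simp; ring]
    exact Real.Gamma_add_one za']
  rw [show Real.Gamma (-(γ*((γ/2 + 2/γ) - (α + 2/γ))/2))
      = (-(γ*((γ/2 + 2/γ) - α)/2)) * Real.Gamma (-(γ*((γ/2 + 2/γ) - α)/2)) from by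
    rw [show -(γ*((γ/2 + 2/γ) - (α + 2/γ))/2) = -(γ*((γ/2 + 2/γ) - α)/2) + 1 from by
      field_simp; ring]
    exact Real.Gamma_add_one zna]
  set A := (Real.pi * μ * lr (γ^2/4)) ^ ((4:ℝ)/γ^2) with hAdef
  set B := (Real.pi * μ * lr (γ^2/4)) ^ (2*((γ/2 + 2/γ) - (α + 2/γ))/γ) with hBdef
  have hA : A ≠ 0 := (Real.rpow_pos_of_pos hP _).ne'
  have hB : B ≠ 0 := (Real.rpow_pos_of_pos hP _).ne'
  simp only [lr]
  rw [show Real.Gamma (1 - 4/γ^2) = (-4/γ^2) * Real.Gamma (-4/γ^2) from by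
    rw [show (1:ℝ) - 4/γ^2 = -4/γ^2 + 1 from by ring]
    exact Real.Gamma_add_one znc]
  rw [show Real.Gamma (1 - -4/γ^2) = (4/γ^2) * Real.Gamma (4/γ^2) from by
    rw [show (1:ℝ) - -4/γ^2 = 4/γ^2 + 1 from by ring]
    exact Real.Gamma_add_one zc]
  rw [show Real.Gamma (2*α/γ)
      = (-(2*((γ/2 + 2/γ) - (α + 2/γ))/γ)) * Real.Gamma (-(2*((γ/2 + 2/γ) - (α + 2/γ))/γ)) from by
    rw [show 2*α/γ = -(2*((γ/2 + 2/γ) - (α + 2/γ))/γ) + 1 from by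
      field_simp; ring]
    exact Real.Gamma_add_one znb']
  rw [show Real.Gamma (1 - 2*α/γ) = Real.Gamma (2*((γ/2 + 2/γ) - (α + 2/γ))/γ) from by
    rw [show (1:ℝ) - 2*α/γ = 2*((γ/2 + 2/γ) - (α + 2/γ))/γ from by field_simp; ring]]
  rw [show Real.Gamma (2 + 4/γ^2 - 2*α/γ)
      = (2*((γ/2 + 2/γ) - α)/γ) * Real.Gamma (2*((γ/2 + 2/γ) - α)/γ) from by
    rw [show (2:ℝ) + 4/γ^2 - 2*α/γ = 2*((γ/2 + 2/γ) - α)/γ + 1 from by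
      field_simp; ring]
    exact Real.Gamma_add_one zb]
  rw [show Real.Gamma (1 - (2 + 4/γ^2 - 2*α/γ)) = Real.Gamma (-(2*((γ/2 + 2/γ) - α)/γ)) from by
    rw [show (1:ℝ) - (2 + 4/γ^2 - 2*α/γ) = -(2*((γ/2 + 2/γ) - α)/γ) from by
      field_simp; ring]]
  set g1 := Real.Gamma (-(γ*((γ/2 + 2/γ) - α)/2)) with hg1
  set g2 := Real.Gamma (γ*((γ/2 + 2/γ) - (α + 2/γ))/2) with hg2
  set g3 := Real.Gamma (-(2*((γ/2 + 2/γ) - α)/γ)) with hg3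
  set g4 := Real.Gamma (2*((γ/2 + 2/γ) - α)/γ) with hg4
  set g5 := Real.Gamma (-(2*((γ/2 + 2/γ) - (α + 2/γ))/γ)) with hg5
  set g6 := Real.Gamma (2*((γ/2 + 2/γ) - (α + 2/γ))/γ) with hg6
  set g7 := Real.Gamma (4/γ^2) with hg7
  set g8 := Real.Gamma (-4/γ^2) with hg8
  exact rdozz_key A B Real.pi g1 g2 g3 g4 g5 g6 g7 g8
    (γ*((γ/2 + 2/γ) - (α + 2/γ))/2) (-(γ*((γ/2 + 2/γ) - α)/2))
    (2*((γ/2 + 2/γ) - α)/γ) (-(2*((γ/2 + 2/γ) - (α + 2/γ))/γ))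
    (4/γ^2) (-4/γ^2)
    (by field_simp; ring) (by field_simp; ring) (by field_simp; ring) (by ring)
    hA hB hπ.ne' za' zna zb znb' zc
    hG1 hG2 hG3 hG4 hG5 hG6 hG7 hG8
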